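/- Let r ≥ 1 and let ε̃_1, ..., ε̃_r be elements of ℂ* × (0,∞)^{r-1}, written ε̃_j = (ε̃_j^{(1)}, ..., ε̃_j^{(r)}) with ε̃_j^{(1)} a nonzero complex number and ε̃_j^{(i)} > 0 for 2 ≤ i ≤ r. Define f_0 : ℝ^{r+1} → ℂ × ℝ^{r-1} by f_0(x)^{(1)} := exp(Σ_{j=1}^r x^{(j)}·log(ε̃_j^{(1)})) · exp(2πi·x^{(r+1)}) and f_0(x)^{(i)} := ∏_{j=1}^r (ε̃_j^{(i)})^{x^{(j)}} for 2 ≤ i ≤ r, where log denotes the principal branch of the complex logarithm. Then f_0 is differentiable and, identifying ℂ × ℝ^{r-1} with ℝ^{r+1} via (z, x) ↦ (Re z, Im z, x), the Jacobian determinant of f_0 at every point P ∈ ℝ^{r+1} equals (-1)^{r+1} · 2π · det(L) · |f_0(P)^{(1)}|² · ∏_{i=2}^{r} f_0(P)^{(i)}, where L is the r×r real matrix with entries L_{ij} = log|ε̃_j^{(i)}| for 1 ≤ i, j ≤ r. -/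

import Mathlib

/-- The identification `ℂ × ℝ^s = ℝ^{s+2}`, `(z, x) ↦ (Re z, Im z, x)`. -/
def emb2 {s : ℕ} (v : ℂ × (Fin s → ℝ)) : Fin (s + 2) → ℝ :=
  Fin.cons v.1.re (Fin.cons v.1.im v.2)

/-- The map `f₀ : ℝ^{r+1} → ℂ × ℝ^{r-1}` (here `r = m + 1`):
`f₀(x)^{(1)} = exp(Σ_j x^{(j)} log ε̃_j^{(1)})·exp(2πi x^{(r+1)})` and
`f₀(x)^{(i)} = ∏_j (ε̃_j^{(i)})^{x^{(j)}}` for `2 ≤ i ≤ r`. -/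
noncomputable def f0 (m : ℕ) (a : Fin (m + 1) → ℂ) (b : Fin (m + 1) → Fin m → ℝ)
    (x : Fin (m + 2) → ℝ) : ℂ × (Fin m → ℝ) :=
  (Complex.exp (∑ j : Fin (m + 1), (x j.castSucc : ℂ) * Complex.log (a j)) *
      Complex.exp (2 * Real.pi * Complex.I * (x (Fin.last (m + 1)) : ℂ)),
    fun i => ∏ j : Fin (m + 1), (b j i) ^ (x j.castSucc))

open Matrix

set_option maxRecDepth 16000

section Aux

lemma detT' (m : ℕ) (x y : ℝ) (g : Fin m → ℝ) :
    (Matrix.of (Fin.cons (Fin.cons x (Fin.cons (-y) 0))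
      (Fin.cons (Fin.cons y (Fin.cons x 0))
        (fun i : Fin m => Pi.single (i.succ.succ : Fin (m+2)) (g i)))) :
      Matrix (Fin (m+2)) (Fin (m+2)) ℝ).det
    = (x^2 + y^2) * ∏ i, g i := by
  set T : Matrix (Fin (m+2)) (Fin (m+2)) ℝ := Matrix.of (Fin.cons (Fin.cons x (Fin.cons (-y) 0))
      (Fin.cons (Fin.cons y (Fin.cons x 0))
        (fun i : Fin m => Pi.single (i.succ.succ : Fin (m+2)) (g i)))) with hT
  have hone : (1 : Fin (m+2)) = (0 : Fin (m+1)).succ := rfl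
  have h0 : (T.submatrix Fin.succ ((0 : Fin (m+2)).succAbove)) = Matrix.diagonal (Fin.cons x g) := by
    ext i j
    simp only [Fin.succAbove_zero, submatrix_apply]
    refine Fin.cases ?_ (fun k => ?_) i <;> refine Fin.cases ?_ (fun l => ?_) j <;>
      simp [hT, Matrix.diagonal_apply, Pi.single_apply, Fin.ext_iff]
    split_ifs <;> simp_all
  have h1 : (T.submatrix Fin.succ (((0 : Fin (m+1)).succ).succAbove)) = Matrix.diagonal (Fin.cons y g) := by
    ext i j
    simp only [submatrix_apply]
    refine Fin.cases ?_ (fun k => ?_) i <;> refine Fin.cases ?_ (fun l => ?_) j <;>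
      simp [hT, Fin.succ_succAbove_zero, Fin.succ_succAbove_succ, Fin.succAbove_zero,
        Matrix.diagonal_apply, Pi.single_apply, Fin.ext_iff]
    split_ifs <;> simp_all
  rw [Matrix.det_succ_row_zero]
  rw [Fin.sum_univ_succ, Fin.sum_univ_succ]
  have hz : ∀ k : Fin m, T 0 k.succ.succ = 0 := by
    intro k; simp [hT]
  simp only [hz, mul_zero, zero_mul, Finset.sum_const_zero, add_zero]
  have e0 : T 0 0 = x := by simp [hT]
  have e1 : T 0 ((0 : Fin (m+1)).succ) = -y := by
    rw [← hone]; rw [hT]; rw [hone]; simp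
  rw [e0, e1, h0, h1, Matrix.det_diagonal, Matrix.det_diagonal,
    Fin.prod_cons, Fin.prod_cons]
  simp [pow_two]
  ring

lemma detA' (m : ℕ) (α β : Fin (m+1) → ℝ) (c : ℝ) (w : Fin m → Fin (m+1) → ℝ) :
    (Matrix.of (Fin.cons (Fin.snoc α 0) (Fin.cons (Fin.snoc β c)
      (fun i : Fin m => Fin.snoc (w i) 0))) : Matrix (Fin (m+2)) (Fin (m+2)) ℝ).det
    = (-1 : ℝ)^(m+2) * c *
      (Matrix.of (Fin.cons α w) : Matrix (Fin (m+1)) (Fin (m+1)) ℝ).det := by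
  set A : Matrix (Fin (m+2)) (Fin (m+2)) ℝ := Matrix.of (Fin.cons (Fin.snoc α 0) (Fin.cons (Fin.snoc β c)
      (fun i : Fin m => Fin.snoc (w i) 0))) with hA
  rw [Matrix.det_succ_column A (Fin.last (m+1))]
  rw [Fin.sum_univ_succ, Fin.sum_univ_succ]
  have hz : ∀ k : Fin m, A k.succ.succ (Fin.last (m+1)) = 0 := by
    intro k
    show (Fin.snoc (w k) 0 : Fin (m+2) → ℝ) (Fin.last (m+1)) = 0
    rw [Fin.snoc_last]
  have h0 : A 0 (Fin.last (m+1)) = 0 := by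
    show (Fin.snoc α 0 : Fin (m+2) → ℝ) (Fin.last (m+1)) = 0
    rw [Fin.snoc_last]
  have h1 : A ((0 : Fin (m+1)).succ) (Fin.last (m+1)) = c := by
    show (Fin.snoc β c : Fin (m+2) → ℝ) (Fin.last (m+1)) = c
    rw [Fin.snoc_last]
  simp only [hz, h0, h1, mul_zero, zero_mul, Finset.sum_const_zero, add_zero, zero_add]
  have hsub : A.submatrix ((0 : Fin (m+1)).succ).succAbove (Fin.last (m+1)).succAbove
      = Matrix.of (Fin.cons α w) := by
    ext i j
    simp only [submatrix_apply, Fin.succAbove_last]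
    refine Fin.cases ?_ (fun k => ?_) i <;>
      simp [hA, Fin.succ_succAbove_zero, Fin.succ_succAbove_succ, Fin.succAbove_zero]
  rw [hsub]
  have hpow : ((Fin.succ (0 : Fin (m+1)) : Fin (m+2)) : ℕ) + ((Fin.last (m+1) : Fin (m+2)) : ℕ) = m + 2 := by
    simp; omega
  rw [hpow]

variable (m : ℕ) (a : Fin (m + 1) → ℂ) (b : Fin (m + 1) → Fin m → ℝ)

noncomputable def Lam : (Fin (m+2) → ℝ) →L[ℝ] ℂ :=
  ∑ k : Fin (m+2), (ContinuousLinearMap.proj k).smulRight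
    ((Fin.snoc (fun j : Fin (m+1) => Complex.log (a j)) (2 * Real.pi * Complex.I) : Fin (m+2) → ℂ) k)

noncomputable def ell (i : Fin m) : (Fin (m+2) → ℝ) →L[ℝ] ℝ :=
  ∑ j : Fin (m+1), (ContinuousLinearMap.proj j.castSucc).smulRight (Real.log (b j i))

lemma Lam_apply (x : Fin (m+2) → ℝ) :
    Lam m a x = ∑ j : Fin (m+1), (x j.castSucc : ℂ) * Complex.log (a j)
      + 2 * Real.pi * Complex.I * (x (Fin.last (m+1)) : ℂ) := by
  simp only [Lam, ContinuousLinearMap.sum_apply, ContinuousLinearMap.smulRight_apply,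
    ContinuousLinearMap.proj_apply]
  rw [Fin.sum_univ_castSucc]
  simp [Fin.snoc_castSucc, Complex.real_smul, mul_comm]

lemma ell_apply (i : Fin m) (x : Fin (m+2) → ℝ) :
    ell m b i x = ∑ j : Fin (m+1), x j.castSucc * Real.log (b j i) := by
  simp [ell]

lemma Lam_single (k : Fin (m+2)) :
    Lam m a (Pi.single k 1) =
      (Fin.snoc (fun j : Fin (m+1) => Complex.log (a j)) (2 * Real.pi * Complex.I) : Fin (m+2) → ℂ) k := by
  simp only [Lam, ContinuousLinearMap.sum_apply, ContinuousLinearMap.smulRight_apply,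
    ContinuousLinearMap.proj_apply]
  rw [Finset.sum_eq_single k]
  · simp
  · intro k' _ hk'
    rw [Pi.single_eq_of_ne hk']
    simp
  · simp

lemma ell_single_cast (i : Fin m) (j : Fin (m+1)) :
    ell m b i (Pi.single j.castSucc 1) = Real.log (b j i) := by
  simp only [ell, ContinuousLinearMap.sum_apply, ContinuousLinearMap.smulRight_apply,
    ContinuousLinearMap.proj_apply]
  rw [Finset.sum_eq_single j]
  · simp
  · intro j' _ hj'
    rw [Pi.single_eq_of_ne (by simpa [Fin.castSucc_inj] using hj')]
    simp
  · simp

lemma ell_single_last (i : Fin m) :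
    ell m b i (Pi.single (Fin.last (m+1)) 1) = 0 := by
  simp only [ell, ContinuousLinearMap.sum_apply, ContinuousLinearMap.smulRight_apply,
    ContinuousLinearMap.proj_apply]
  refine Finset.sum_eq_zero fun j _ => ?_
  rw [Pi.single_eq_of_ne (Fin.castSucc_lt_last j).ne]
  simp

lemma hf0eq (hb : ∀ j i, 0 < b j i) :
    f0 m a b = fun x => (Complex.exp (Lam m a x), fun i => Real.exp (ell m b i x)) := by
  funext x
  unfold f0
  refine Prod.ext ?_ ?_
  · rw [Lam_apply, Complex.exp_add]
  · funext i
    dsimp only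
    rw [ell_apply, Real.exp_sum]
    exact Finset.prod_congr rfl fun j _ =>
      by rw [Real.rpow_def_of_pos (hb j i), mul_comm]

lemma hderiv (hb : ∀ j i, 0 < b j i) (P : Fin (m+2) → ℝ) :
    HasFDerivAt (f0 m a b)
      ((Complex.exp (Lam m a P) • Lam m a).prod
        (ContinuousLinearMap.pi fun i => Real.exp (ell m b i P) • ell m b i)) P := by
  rw [hf0eq m a b hb]
  exact ((Lam m a).hasFDerivAt.cexp).prodMk
    (hasFDerivAt_pi.2 fun i => ((ell m b i).hasFDerivAt).exp)

end Aux

/-- Statement 19, with `r = m + 1` (so that `r ≥ 1`). -/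
theorem stmt19 (m : ℕ) (a : Fin (m + 1) → ℂ) (ha : ∀ j, a j ≠ 0)
    (b : Fin (m + 1) → Fin m → ℝ) (hb : ∀ j i, 0 < b j i) :
    Differentiable ℝ (f0 m a b) ∧
    ∀ P : Fin (m + 2) → ℝ,
      (Matrix.of fun i j : Fin (m + 2) =>
          emb2 ((fderiv ℝ (f0 m a b) P) (Pi.single j (1 : ℝ))) i).det
        = (-1 : ℝ) ^ (m + 2) * (2 * Real.pi) *
          (Matrix.of fun i j : Fin (m + 1) =>
            if h : (i : ℕ) = 0 then Real.log (‖a j‖)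
            else Real.log (b j ⟨(i : ℕ) - 1, by have := i.isLt; omega⟩)).det *
          ‖(f0 m a b P).1‖ ^ 2 * ∏ i : Fin m, (f0 m a b P).2 i := by
  constructor
  · exact fun P => (hderiv m a b hb P).differentiableAt
  intro P
  set z : ℂ := Complex.exp (Lam m a P) with hz
  set g : Fin m → ℝ := fun i => Real.exp (ell m b i P) with hg
  set T : Matrix (Fin (m+2)) (Fin (m+2)) ℝ := Matrix.of (Fin.cons (Fin.cons z.re (Fin.cons (-z.im) 0))
      (Fin.cons (Fin.cons z.im (Fin.cons z.re 0))
        (fun i : Fin m => Pi.single (i.succ.succ : Fin (m+2)) (g i)))) with hT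
  set A : Matrix (Fin (m+2)) (Fin (m+2)) ℝ := Matrix.of
      (Fin.cons (Fin.snoc (fun j => Real.log (‖a j‖)) 0)
        (Fin.cons (Fin.snoc (fun j => (Complex.log (a j)).im) (2 * Real.pi))
          (fun i : Fin m => Fin.snoc (fun j => Real.log (b j i)) 0))) with hA
  have hone : (1 : Fin (m+2)) = (0 : Fin (m+1)).succ := rfl
  -- values of the derivative
  have hD : ∀ v : Fin (m+2) → ℝ,
      (fderiv ℝ (f0 m a b) P) v = (z * Lam m a v, fun i => g i * ell m b i v) := by
    intro v
    rw [(hderiv m a b hb P).fderiv]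
    simp [ContinuousLinearMap.prod_apply, ContinuousLinearMap.smul_apply,
      ContinuousLinearMap.pi_apply, smul_eq_mul]
    exact ⟨Or.inl rfl, rfl⟩
  -- the matrix factorization
  have hM : (Matrix.of fun i j : Fin (m + 2) =>
      emb2 ((fderiv ℝ (f0 m a b) P) (Pi.single j (1 : ℝ))) i) = T * A := by
    ext i j
    rw [Matrix.of_apply, hD]
    -- expand the T*A entry
    have mulrow0 : ∀ j', (T * A) 0 j' = z.re * A 0 j' + (-z.im) * A ((0 : Fin (m+1)).succ) j' := by
      intro j'
      rw [Matrix.mul_apply, Fin.sum_univ_succ, Fin.sum_univ_succ]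
      have h2 : ∀ k : Fin m, T 0 k.succ.succ = 0 := fun k => by simp [hT]
      have e0 : T 0 0 = z.re := by simp [hT]
      have e1 : T 0 1 = -z.im := by rw [hone, hT]; simp
      simp [h2, e0, e1]
      try ring
    have mulrow1 : ∀ j', (T * A) ((0 : Fin (m+1)).succ) j'
        = z.im * A 0 j' + z.re * A ((0 : Fin (m+1)).succ) j' := by
      intro j'
      rw [Matrix.mul_apply, Fin.sum_univ_succ, Fin.sum_univ_succ]
      have h2 : ∀ k : Fin m, T 1 k.succ.succ = 0 := fun k => by
        rw [hone, hT]; simp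
      have e0 : T 1 0 = z.im := by rw [hone, hT]; simp
      have e1 : T 1 1 = z.re := by rw [hone, hT]; simp
      simp [h2, e0, e1]
      try ring
    have mulrow2 : ∀ (k : Fin m) j', (T * A) k.succ.succ j' = g k * A k.succ.succ j' := by
      intro k j'
      rw [Matrix.mul_apply]
      rw [Finset.sum_eq_single k.succ.succ]
      · have : T k.succ.succ k.succ.succ = g k := by simp [hT]
        rw [this]
      · intro c _ hc
        have : T k.succ.succ c = 0 := by
          rw [hT]; simp only [Matrix.of_apply, Fin.cons_succ]
          exact Pi.single_eq_of_ne hc _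
        rw [this, zero_mul]
      · simp
    -- case split on i and j
    refine Fin.cases ?_ (fun i1 => ?_) i
    · -- row 0 : real part
      rw [mulrow0]
      refine Fin.lastCases ?_ (fun j' => ?_) j
      · rw [Lam_single]
        simp only [Fin.snoc_last]
        show (z * (2 * (Real.pi : ℂ) * Complex.I)).re = _
        have hA0 : A 0 (Fin.last (m+1)) = 0 := by
          show (Fin.snoc (fun j => Real.log (‖a j‖)) 0 : Fin (m+2) → ℝ) (Fin.last (m+1)) = 0
          rw [Fin.snoc_last]
        have hA1 : A ((0 : Fin (m+1)).succ) (Fin.last (m+1)) = 2 * Real.pi := by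
          show (Fin.snoc (fun j => (Complex.log (a j)).im) (2 * Real.pi) : Fin (m+2) → ℝ) (Fin.last (m+1)) = 2 * Real.pi
          rw [Fin.snoc_last]
        rw [hA0, hA1]
        simp [Complex.mul_re]
        try ring
      · rw [Lam_single]
        simp only [Fin.snoc_castSucc]
        show (z * Complex.log (a j')).re = _
        have hA0 : A 0 j'.castSucc = Real.log (‖a j'‖) := by
          show (Fin.snoc (fun j => Real.log (‖a j‖)) 0 : Fin (m+2) → ℝ) j'.castSucc = _
          rw [Fin.snoc_castSucc]
        have hA1 : A ((0 : Fin (m+1)).succ) j'.castSucc = (Complex.log (a j')).im := by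
          show (Fin.snoc (fun j => (Complex.log (a j)).im) (2 * Real.pi) : Fin (m+2) → ℝ) j'.castSucc = _
          rw [Fin.snoc_castSucc]
        rw [hA0, hA1, Complex.mul_re, Complex.log_re]
        ring
    · refine Fin.cases ?_ (fun i2 => ?_) i1
      · -- row 1 : imaginary part
        rw [mulrow1]
        refine Fin.lastCases ?_ (fun j' => ?_) j
        · rw [Lam_single]
          simp only [Fin.snoc_last]
          show (z * (2 * (Real.pi : ℂ) * Complex.I)).im = _
          have hA0 : A 0 (Fin.last (m+1)) = 0 := by
            show (Fin.snoc (fun j => Real.log (‖a j‖)) 0 : Fin (m+2) → ℝ) (Fin.last (m+1)) = 0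
            rw [Fin.snoc_last]
          have hA1 : A ((0 : Fin (m+1)).succ) (Fin.last (m+1)) = 2 * Real.pi := by
            show (Fin.snoc (fun j => (Complex.log (a j)).im) (2 * Real.pi) : Fin (m+2) → ℝ) (Fin.last (m+1)) = 2 * Real.pi
            rw [Fin.snoc_last]
          rw [hA0, hA1]
          simp [Complex.mul_im]
          try ring
        · rw [Lam_single]
          simp only [Fin.snoc_castSucc]
          show (z * Complex.log (a j')).im = _
          have hA0 : A 0 j'.castSucc = Real.log (‖a j'‖) := by
            show (Fin.snoc (fun j => Real.log (‖a j‖)) 0 : Fin (m+2) → ℝ) j'.castSucc = _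
            rw [Fin.snoc_castSucc]
          have hA1 : A ((0 : Fin (m+1)).succ) j'.castSucc = (Complex.log (a j')).im := by
            show (Fin.snoc (fun j => (Complex.log (a j)).im) (2 * Real.pi) : Fin (m+2) → ℝ) j'.castSucc = _
            rw [Fin.snoc_castSucc]
          rw [hA0, hA1, Complex.mul_im, Complex.log_re]
          ring
      · -- rows ≥ 2
        rw [mulrow2]
        refine Fin.lastCases ?_ (fun j' => ?_) j
        · have hA2 : A i2.succ.succ (Fin.last (m+1)) = 0 := by
            show (Fin.snoc (fun j => Real.log (b j i2)) 0 : Fin (m+2) → ℝ) (Fin.last (m+1)) = 0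
            rw [Fin.snoc_last]
          show g i2 * ell m b i2 (Pi.single (Fin.last (m+1)) 1) = g i2 * A i2.succ.succ (Fin.last (m+1))
          rw [hA2, ell_single_last]
        · have hA2 : A i2.succ.succ j'.castSucc = Real.log (b j' i2) := by
            show (Fin.snoc (fun j => Real.log (b j i2)) 0 : Fin (m+2) → ℝ) j'.castSucc = _
            rw [Fin.snoc_castSucc]
          show g i2 * ell m b i2 (Pi.single j'.castSucc 1) = g i2 * A i2.succ.succ j'.castSucc
          rw [hA2, ell_single_cast]
  -- the dite matrix
  have hLmat : (Matrix.of fun i j : Fin (m + 1) =>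
      if h : (i : ℕ) = 0 then Real.log (‖a j‖)
      else Real.log (b j ⟨(i : ℕ) - 1, by have := i.isLt; omega⟩))
      = Matrix.of (Fin.cons (fun j => Real.log (‖a j‖))
          (fun i j => Real.log (b j i))) := by
    ext i j
    refine Fin.cases ?_ (fun k => ?_) i
    · simp
    · simp only [Matrix.of_apply, Fin.cons_succ, Fin.val_succ, Nat.add_sub_cancel]
      rw [dif_neg (Nat.succ_ne_zero _)]
  -- the components of f0 at P
  have hfst : (f0 m a b P).1 = z := by rw [hf0eq m a b hb]
  have hsnd : ∀ i, (f0 m a b P).2 i = g i := by intro i; rw [hf0eq m a b hb]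
  rw [hM, Matrix.det_mul, hT, hA, detT', detA', hLmat, hfst]
  have habs : (‖z‖)^2 = z.re^2 + z.im^2 := by
    rw [Complex.sq_norm, Complex.normSq_apply]; ring
  rw [habs]
  rw [Finset.prod_congr rfl (fun i _ => hsnd i)]
  ring
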